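/- Suppose d ∈ ℕ₀, g = (g_1,…,g_m) is a tuple of polynomials in ℝ[X_1,…,X_n] each of degree at most d, and S(g) is compact, convex and has nonempty interior. Then S_d(g) = S(g) if and only if every polynomial f ∈ ℝ[X_1,…,X_n] of degree at most 1 with f ≥ 0 on S(g) lies in M_d(g). -/

import Mathlib

open MvPolynomial Matrix

noncomputable section

/-- `S(g) = {x ∈ ℝⁿ : g₁(x) ≥ 0, …, g_m(x) ≥ 0}`. -/
def SolSet {n m : ℕ} (g : Fin m → MvPolynomial (Fin n) ℝ) : Set (Fin n → ℝ) :=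
  {x | ∀ i, 0 ≤ eval x (g i)}

/-- The extended tuple `(g₀, g₁, …, g_m)` with `g₀ := 1`. -/
def withOne {n m : ℕ} (g : Fin m → MvPolynomial (Fin n) ℝ) :
    Fin (m + 1) → MvPolynomial (Fin n) ℝ :=
  Fin.cons 1 g

/-- A polynomial is a sum of squares. -/
def IsSOS {n : ℕ} (p : MvPolynomial (Fin n) ℝ) : Prop :=
  ∃ (l : ℕ) (q : Fin l → MvPolynomial (Fin n) ℝ), p = ∑ i, q i ^ 2

/-- The quadratic module `M(g)` generated by `g₁,…,g_m` (with `g₀ := 1`). -/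
def QM {n m : ℕ} (g : Fin m → MvPolynomial (Fin n) ℝ) : Set (MvPolynomial (Fin n) ℝ) :=
  {f | ∃ s : Fin (m + 1) → MvPolynomial (Fin n) ℝ,
    (∀ i, IsSOS (s i)) ∧ f = ∑ i, s i * withOne g i}

/-- A quadratic module is Archimedean if for every polynomial `p` there is `N ∈ ℕ`
with `N - p ∈ M`. -/
def IsArchimedeanQM {n : ℕ} (M : Set (MvPolynomial (Fin n) ℝ)) : Prop :=
  ∀ p : MvPolynomial (Fin n) ℝ, ∃ N : ℕ, (N : MvPolynomial (Fin n) ℝ) - p ∈ M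

/-- `p ∈ ℝ[X]_{r_i}` where `r_i = (d - deg g_i)/2` if `g_i ≠ 0` and `r_i = -∞` if `g_i = 0`:
either `p = 0`, or `g_i ≠ 0` and `2 deg p + deg g_i ≤ d`. -/
def DegOK {n : ℕ} (d : ℕ) (gi p : MvPolynomial (Fin n) ℝ) : Prop :=
  p = 0 ∨ (gi ≠ 0 ∧ 2 * p.totalDegree + gi.totalDegree ≤ d)

/-- The `d`-truncated `k×k` matricial quadratic module `M_d^{k×k}(g)`. -/
def MatTruncQM {n : ℕ} (d : ℕ) {m : ℕ} (g : Fin m → MvPolynomial (Fin n) ℝ) (k : ℕ) :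
    Set (Matrix (Fin k) (Fin k) (MvPolynomial (Fin n) ℝ)) :=
  {H | ∃ (N : ℕ) (P : Fin (m + 1) → Fin N → Matrix (Fin k) (Fin k) (MvPolynomial (Fin n) ℝ)),
    (∀ i j a b, DegOK d (withOne g i) (P i j a b)) ∧
    H = ∑ i, ∑ j, withOne g i • ((P i j)ᵀ * P i j)}


/-- The `d`-truncated quadratic module `M_d(g)`. -/
def TruncQM {n : ℕ} (d : ℕ) {m : ℕ} (g : Fin m → MvPolynomial (Fin n) ℝ) :
    Set (MvPolynomial (Fin n) ℝ) :=
  {f | ∃ (N : ℕ) (p : Fin (m + 1) → Fin N → MvPolynomial (Fin n) ℝ),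
    (∀ i j, DegOK d (withOne g i) (p i j)) ∧
    f = ∑ i, ∑ j, p i j ^ 2 * withOne g i}

/-- The degree `d` Lasserre relaxation `S_d(g)`: all `x ∈ ℝⁿ` admitting a linear functional
`L` on `ℝ[X]_d` with `L(1) = 1`, `L(X_i) = x_i` and `L ≥ 0` on `M_d(g)`. -/
def Lasserre {n : ℕ} (d : ℕ) {m : ℕ} (g : Fin m → MvPolynomial (Fin n) ℝ) :
    Set (Fin n → ℝ) :=
  {x | ∃ L : MvPolynomial.restrictTotalDegree (Fin n) ℝ d →ₗ[ℝ] ℝ,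
    (∀ p : MvPolynomial.restrictTotalDegree (Fin n) ℝ d,
      (p : MvPolynomial (Fin n) ℝ) = 1 → L p = 1) ∧
    (∀ i : Fin n, ∀ p : MvPolynomial.restrictTotalDegree (Fin n) ℝ d,
      (p : MvPolynomial (Fin n) ℝ) = X i → L p = x i) ∧
    (∀ p : MvPolynomial.restrictTotalDegree (Fin n) ℝ d,
      (p : MvPolynomial (Fin n) ℝ) ∈ TruncQM d g → 0 ≤ L p)}



variable {n : ℕ} {d : ℕ}

lemma DegOK.term_totalDegree_le {gi p : MvPolynomial (Fin n) ℝ} (h : DegOK d gi p) :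
    (p ^ 2 * gi).totalDegree ≤ d := by
  rcases h with h | ⟨-, h⟩
  · simp [h]
  · calc (p ^ 2 * gi).totalDegree ≤ (p ^ 2).totalDegree + gi.totalDegree :=
        totalDegree_mul _ _
    _ ≤ 2 * p.totalDegree + gi.totalDegree := by
        have := totalDegree_pow p 2
        omega
    _ ≤ d := h

/-- The submodule of polynomials satisfying `DegOK d gi`. -/
def DegSub (d : ℕ) (gi : MvPolynomial (Fin n) ℝ) : Submodule ℝ (MvPolynomial (Fin n) ℝ) where
  carrier := {p | DegOK d gi p}
  zero_mem' := Or.inl rfl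
  add_mem' := by
    rintro p q (rfl | ⟨hg, hp⟩) hq
    · simpa using hq
    rcases hq with rfl | ⟨-, hq⟩
    · simpa [DegOK] using Or.inr ⟨hg, hp⟩
    refine Or.inr ⟨hg, ?_⟩
    have := totalDegree_add p q
    have : (p + q).totalDegree ≤ max p.totalDegree q.totalDegree := this
    rcases max_cases p.totalDegree q.totalDegree with ⟨h1, -⟩ | ⟨h1, -⟩ <;> omega
  smul_mem' := by
    rintro c p (rfl | ⟨hg, hp⟩)
    · exact Or.inl (smul_zero c)
    refine Or.inr ⟨hg, ?_⟩
    have := totalDegree_smul_le c p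
    omega

lemma mem_DegSub_iff {gi p : MvPolynomial (Fin n) ℝ} : p ∈ DegSub d gi ↔ DegOK d gi p := Iff.rfl

lemma DegSub_le_restrict (gi : MvPolynomial (Fin n) ℝ) :
    DegSub d gi ≤ restrictTotalDegree (Fin n) ℝ d := by
  rintro p (rfl | ⟨-, hp⟩)
  · simp [mem_restrictTotalDegree]
  · rw [mem_restrictTotalDegree]; omega

instance (gi : MvPolynomial (Fin n) ℝ) : FiniteDimensional ℝ (DegSub d gi) :=
  Submodule.finiteDimensional_of_le (DegSub_le_restrict gi)


section Aux2

variable {n m : ℕ} {d : ℕ} {g : Fin m → MvPolynomial (Fin n) ℝ}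

lemma withOne_zero (g : Fin m → MvPolynomial (Fin n) ℝ) : withOne g 0 = 1 := rfl

lemma withOne_ne_zero_zero (g : Fin m → MvPolynomial (Fin n) ℝ) : withOne g 0 ≠ 0 :=
  one_ne_zero

lemma eval_withOne_nonneg {x : Fin n → ℝ} (hx : x ∈ SolSet g) (i : Fin (m + 1)) :
    0 ≤ eval x (withOne g i) := by
  induction i using Fin.cases with
  | zero => simp [withOne]
  | succ i => simpa [withOne] using hx i

lemma TruncQM.totalDegree_le {q : MvPolynomial (Fin n) ℝ} (h : q ∈ TruncQM d g) :
    q.totalDegree ≤ d := by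
  obtain ⟨N, p, hdeg, rfl⟩ := h
  refine (totalDegree_finset_sum _ _).trans ?_
  refine Finset.sup_le fun i _ => ?_
  refine (totalDegree_finset_sum _ _).trans ?_
  exact Finset.sup_le fun j _ => (hdeg i j).term_totalDegree_le

lemma TruncQM.mem_restrict {q : MvPolynomial (Fin n) ℝ} (h : q ∈ TruncQM d g) :
    q ∈ restrictTotalDegree (Fin n) ℝ d :=
  (mem_restrictTotalDegree _ _ _).2 (TruncQM.totalDegree_le h)

lemma TruncQM.eval_nonneg {q : MvPolynomial (Fin n) ℝ} (h : q ∈ TruncQM d g)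
    {x : Fin n → ℝ} (hx : x ∈ SolSet g) : 0 ≤ eval x q := by
  obtain ⟨N, p, -, rfl⟩ := h
  simp only [map_sum]
  refine Finset.sum_nonneg fun i _ => Finset.sum_nonneg fun j _ => ?_
  rw [_root_.map_mul, _root_.map_pow]
  exact mul_nonneg (sq_nonneg _) (eval_withOne_nonneg hx i)

lemma one_mem_TruncQM : (1 : MvPolynomial (Fin n) ℝ) ∈ TruncQM d g := by
  refine ⟨1, fun i _ => if i = 0 then 1 else 0, fun i j => ?_, ?_⟩
  · by_cases hi : i = 0
    · simp only [hi, if_pos]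
      exact Or.inr ⟨one_ne_zero, by simp [withOne]⟩
    · simp only [if_neg hi]
      exact Or.inl rfl
  · rw [Fin.sum_univ_succ]
    simp [withOne, Fin.succ_ne_zero]

lemma TruncQM.add_mem {q₁ q₂ : MvPolynomial (Fin n) ℝ} (h₁ : q₁ ∈ TruncQM d g)
    (h₂ : q₂ ∈ TruncQM d g) : q₁ + q₂ ∈ TruncQM d g := by
  obtain ⟨N₁, p₁, hd₁, rfl⟩ := h₁
  obtain ⟨N₂, p₂, hd₂, rfl⟩ := h₂
  refine ⟨N₁ + N₂, fun i => Fin.append (p₁ i) (p₂ i), fun i j => ?_, ?_⟩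
  · induction j using Fin.addCases with
    | left j => simpa [Fin.append_left] using hd₁ i j
    | right j => simpa [Fin.append_right] using hd₂ i j
  · rw [← Finset.sum_add_distrib]
    refine Finset.sum_congr rfl fun i _ => ?_
    rw [Fin.sum_univ_add]
    simp [Fin.append_left, Fin.append_right, Finset.sum_add_distrib]

lemma TruncQM.smul_mem {q : MvPolynomial (Fin n) ℝ} (h : q ∈ TruncQM d g) {c : ℝ}
    (hc : 0 ≤ c) : c • q ∈ TruncQM d g := by
  obtain ⟨N, p, hdeg, rfl⟩ := h
  refine ⟨N, fun i j => C (Real.sqrt c) * p i j, fun i j => ?_, ?_⟩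
  · dsimp only
    rcases hdeg i j with h | ⟨hg, hp⟩
    · exact Or.inl (by simp [h])
    · refine Or.inr ⟨hg, ?_⟩
      have h1 := totalDegree_mul (C (Real.sqrt c) : MvPolynomial (Fin n) ℝ) (p i j)
      rw [totalDegree_C] at h1
      omega
  · rw [Finset.smul_sum]
    refine Finset.sum_congr rfl fun i _ => ?_
    rw [Finset.smul_sum]
    refine Finset.sum_congr rfl fun j _ => ?_
    rw [mul_pow, ← C_pow, smul_eq_C_mul, Real.sq_sqrt hc, mul_assoc]

lemma isClosed_SolSet : IsClosed (SolSet g) := by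
  have : SolSet g = ⋂ i, {x | 0 ≤ eval x (g i)} := by
    ext x; simp [SolSet, Set.mem_iInter]
  rw [this]
  exact isClosed_iInter fun i =>
    isClosed_le continuous_const (by exact MvPolynomial.continuous_eval _)

lemma SolSet_subset_Lasserre : SolSet g ⊆ Lasserre d g := by
  intro x hx
  refine ⟨{ toFun := fun p => eval x (p : MvPolynomial (Fin n) ℝ)
            map_add' := fun p q => by simp only [Submodule.coe_add, map_add]
            map_smul' := fun c p => by
              simp only [Submodule.coe_smul, smul_eq_C_mul, _root_.map_mul, eval_C,
                RingHom.id_apply, smul_eq_mul] }, fun p hp => by simp [hp],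
    fun i p hp => by simp [hp], fun p hp => TruncQM.eval_nonneg hp hx⟩

end Aux2

section Aux3

variable {n m : ℕ}

lemma single_of_sum_le_one {mo : Fin n →₀ ℕ} (h : (mo.sum fun _ e => e) ≤ 1)
    (h0 : mo ≠ 0) : ∃ i, mo = Finsupp.single i 1 := by
  obtain ⟨i, hi⟩ := Finsupp.support_nonempty_iff.2 h0
  have hsum : (mo.sum fun _ e => e) = ∑ a ∈ mo.support, mo a := rfl
  have hle : mo i ≤ ∑ a ∈ mo.support, mo a :=
    Finset.single_le_sum (fun a _ => Nat.zero_le _) hi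
  have hi1 : mo i = 1 := by
    have := Finsupp.mem_support_iff.1 hi
    omega
  refine ⟨i, Finsupp.ext fun j => ?_⟩
  rcases eq_or_ne j i with rfl | hj
  · simp [hi1]
  · rw [Finsupp.single_apply, if_neg (Ne.symm hj)]
    by_contra hmj
    have hjs : j ∈ mo.support := Finsupp.mem_support_iff.2 hmj
    have hsub : ({i, j} : Finset (Fin n)) ⊆ mo.support := by
      intro a ha
      rcases Finset.mem_insert.1 ha with rfl | ha
      · exact hi
      · rwa [Finset.mem_singleton.1 ha]
    have : ∑ a ∈ ({i, j} : Finset (Fin n)), mo a ≤ ∑ a ∈ mo.support, mo a :=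
      Finset.sum_le_sum_of_subset hsub
    rw [Finset.sum_pair (Ne.symm hj)] at this
    omega

lemma decomp_deg_le_one {f : MvPolynomial (Fin n) ℝ} (hf : f.totalDegree ≤ 1) :
    f = C (coeff 0 f) + ∑ i, C (coeff (Finsupp.single i 1) f) * X i := by
  apply MvPolynomial.ext
  intro mo
  rw [coeff_add, coeff_C, coeff_sum]
  have hXc : ∀ i : Fin n, coeff mo (C (coeff (Finsupp.single i 1) f) * X i)
      = coeff (Finsupp.single i 1) f * if Finsupp.single i 1 = mo then 1 else 0 := by
    intro i
    rw [coeff_C_mul, coeff_X']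
  simp only [hXc]
  rcases eq_or_ne mo 0 with rfl | h0
  · rw [if_pos rfl]
    have : ∀ i : Fin n, (if Finsupp.single i 1 = (0 : Fin n →₀ ℕ) then (1:ℝ) else 0) = 0 := by
      intro i
      rw [if_neg (fun hh => one_ne_zero (Finsupp.single_eq_zero.1 hh))]
    simp [this]
  · rw [if_neg (Ne.symm h0)]
    by_cases hs : ∃ i, mo = Finsupp.single i 1
    · obtain ⟨i0, rfl⟩ := hs
      have : ∀ i : Fin n, (if Finsupp.single i 1 = Finsupp.single i0 1 then (1:ℝ) else 0)
          = if i = i0 then 1 else 0 := by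
        intro i
        congr 1
        simp [Finsupp.single_left_inj (one_ne_zero (α := ℕ))]
      simp only [this, mul_ite, mul_one, mul_zero, Finset.sum_ite_eq',
        Finset.mem_univ, if_pos]
      ring
    · push_neg at hs
      have hL : coeff mo f = 0 := by
        by_contra hc
        have hmem : mo ∈ f.support := MvPolynomial.mem_support_iff.2 hc
        have := MvPolynomial.le_totalDegree hmem
        obtain ⟨i, hi⟩ := single_of_sum_le_one (this.trans hf) h0
        exact hs i hi
      have : ∀ i : Fin n, coeff (Finsupp.single i 1) f *
          (if Finsupp.single i 1 = mo then (1:ℝ) else 0) = 0 := by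
        intro i
        rw [if_neg fun hmo => hs i hmo.symm, mul_zero]
      simp [hL, this]

lemma eval_deg_le_one {f : MvPolynomial (Fin n) ℝ} (hf : f.totalDegree ≤ 1) (x : Fin n → ℝ) :
    eval x f = coeff 0 f + ∑ i, coeff (Finsupp.single i 1) f * x i := by
  conv_lhs => rw [decomp_deg_le_one hf]
  simp

lemma L_eval {d : ℕ} (hd : 1 ≤ d) (L : restrictTotalDegree (Fin n) ℝ d →ₗ[ℝ] ℝ) (x : Fin n → ℝ)
    (h1 : ∀ p : restrictTotalDegree (Fin n) ℝ d, (p : MvPolynomial (Fin n) ℝ) = 1 → L p = 1)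
    (hX : ∀ i : Fin n, ∀ p : restrictTotalDegree (Fin n) ℝ d,
      (p : MvPolynomial (Fin n) ℝ) = X i → L p = x i)
    {f : MvPolynomial (Fin n) ℝ} (hf : f.totalDegree ≤ 1)
    (hfW : f ∈ restrictTotalDegree (Fin n) ℝ d) :
    L ⟨f, hfW⟩ = eval x f := by
  have h1m : (1 : MvPolynomial (Fin n) ℝ) ∈ restrictTotalDegree (Fin n) ℝ d := by
    rw [mem_restrictTotalDegree, totalDegree_one]; omega
  have hXm : ∀ i : Fin n, (X i : MvPolynomial (Fin n) ℝ) ∈ restrictTotalDegree (Fin n) ℝ d := by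
    intro i
    rw [mem_restrictTotalDegree, totalDegree_X]; omega
  have key : (⟨f, hfW⟩ : restrictTotalDegree (Fin n) ℝ d)
      = coeff 0 f • ⟨1, h1m⟩ + ∑ i, coeff (Finsupp.single i 1) f • ⟨X i, hXm i⟩ := by
    apply Subtype.ext
    push_cast [AddSubmonoidClass.coe_finset_sum]
    conv_lhs => rw [decomp_deg_le_one hf]
    simp [smul_eq_C_mul]
  rw [key, map_add, LinearMap.map_smul, map_sum, h1 _ rfl, eval_deg_le_one hf x]
  simp only [LinearMap.map_smul, smul_eq_mul, mul_one]
  congr 1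
  refine Finset.sum_congr rfl fun i _ => ?_
  rw [hX i _ rfl]

lemma eq_zero_of_eqOn_open {p : MvPolynomial (Fin n) ℝ} {U : Set (Fin n → ℝ)} (hU : IsOpen U)
    (hne : U.Nonempty) (h : ∀ x ∈ U, eval x p = 0) : p = 0 := by
  have han : AnalyticOnNhd ℝ (fun x : Fin n → ℝ => eval x p) Set.univ := by
    simpa using AnalyticOnNhd.eval_continuousLinearMap
      (ContinuousLinearMap.id ℝ (Fin n → ℝ)) p
  obtain ⟨x0, hx0⟩ := hne
  have hz : (fun x : Fin n → ℝ => eval x p) =ᶠ[nhds x0] 0 :=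
    Filter.eventuallyEq_of_mem (hU.mem_nhds hx0) h
  have hall := han.eqOn_zero_of_preconnected_of_eventuallyEq_zero
    isPreconnected_univ (Set.mem_univ x0) hz
  apply MvPolynomial.funext (R := ℝ)
  intro x
  simpa using hall (Set.mem_univ x)

end Aux3


section Gram

variable {n : ℕ}

lemma sum_sq_eq {D K : ℕ} (β : Fin D → MvPolynomial (Fin n) ℝ)
    (M : Matrix (Fin K) (Fin D) ℝ) :
    ∑ j, (∑ a, M j a • β a) ^ 2 = ∑ a, ∑ a', (Mᵀ * M) a a' • (β a * β a') := by
  have key : ∀ j : Fin K, (∑ a, M j a • β a) ^ 2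
      = ∑ a, ∑ a', (M j a * M j a') • (β a * β a') := by
    intro j
    rw [sq, Finset.sum_mul_sum]
    refine Finset.sum_congr rfl fun a _ => Finset.sum_congr rfl fun a' _ => ?_
    rw [smul_mul_smul_comm]
  rw [Finset.sum_congr rfl fun j _ => key j, Finset.sum_comm]
  refine Finset.sum_congr rfl fun a _ => ?_
  rw [Finset.sum_comm]
  refine Finset.sum_congr rfl fun a' _ => ?_
  rw [← Finset.sum_smul, Matrix.mul_apply]
  rfl

lemma gram_reduction {V : Submodule ℝ (MvPolynomial (Fin n) ℝ)} [FiniteDimensional ℝ V]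
    {D : ℕ} (b : Module.Basis (Fin D) ℝ V) {N : ℕ} (q : Fin N → V) :
    ∃ cm : Fin D → Fin D → ℝ,
      ∑ j, (q j : MvPolynomial (Fin n) ℝ) ^ 2
        = ∑ k, (∑ a, cm k a • ((b a : MvPolynomial (Fin n) ℝ))) ^ 2 := by
  set β : Fin D → MvPolynomial (Fin n) ℝ := fun a => (b a : MvPolynomial (Fin n) ℝ) with hβ
  set G : Matrix (Fin N) (Fin D) ℝ := Matrix.of fun j a => b.repr (q j) a with hG
  have hq : ∀ j, (q j : MvPolynomial (Fin n) ℝ) = ∑ a, G j a • β a := by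
    intro j
    have h0 := b.sum_repr (q j)
    calc (q j : MvPolynomial (Fin n) ℝ) = ((∑ a, b.repr (q j) a • b a : V) : MvPolynomial (Fin n) ℝ) := by
          rw [h0]
    _ = ∑ a, G j a • β a := by
          push_cast [AddSubmonoidClass.coe_finset_sum]
          rfl
  have hpsd : Matrix.PosSemidef (Gᴴ * G) := Matrix.posSemidef_conjTranspose_mul_self G
  obtain ⟨B, hB⟩ : ∃ B : Matrix (Fin D) (Fin D) ℝ, Gᴴ * G = Bᴴ * B := by
    open scoped MatrixOrder in
    refine ⟨CFC.sqrt (Gᴴ * G), ?_⟩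
    open scoped MatrixOrder in
    have hs := (CFC.sqrt_nonneg (Gᴴ * G)).isSelfAdjoint.star_eq
    rw [Matrix.star_eq_conjTranspose] at hs
    open scoped MatrixOrder in
    rw [hs, CFC.sqrt_mul_sqrt_self _ hpsd.nonneg]
  have hBt : Gᵀ * G = Bᵀ * B := by
    have h1 : Gᴴ = Gᵀ := Matrix.conjTranspose_eq_transpose_of_trivial G
    have h2 : Bᴴ = Bᵀ := Matrix.conjTranspose_eq_transpose_of_trivial B
    rw [← h1, ← h2, hB]
  refine ⟨fun k a => B k a, ?_⟩
  have h1 : ∑ j, (q j : MvPolynomial (Fin n) ℝ) ^ 2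
      = ∑ a, ∑ a', (Gᵀ * G) a a' • (β a * β a') := by
    rw [Finset.sum_congr rfl fun j _ => by rw [hq j]]
    exact sum_sq_eq β G
  have h2 : ∑ k, (∑ a, B k a • β a) ^ 2 = ∑ a, ∑ a', (Bᵀ * B) a a' • (β a * β a') :=
    sum_sq_eq β B
  rw [h1, h2, hBt]

end Gram


section Param

variable {n m : ℕ} (d : ℕ) (g : Fin m → MvPolynomial (Fin n) ℝ)

/-- Dimension of the `i`-th coefficient space. -/
def DDim (i : Fin (m + 1)) : ℕ := Module.finrank ℝ (DegSub d (withOne g i))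

set_option synthInstance.maxHeartbeats 1000000 in
/-- Basis of the `i`-th coefficient space. -/
def bV (i : Fin (m + 1)) : Module.Basis (Fin (DDim d g i)) ℝ (DegSub d (withOne g i)) :=
  Module.finBasis ℝ _

/-- Coefficient space for uniform representations. -/
abbrev EE := ∀ i : Fin (m + 1), Fin (DDim d g i) → Fin (DDim d g i) → ℝ

def Pc (c : EE d g) (i : Fin (m + 1)) (j : Fin (DDim d g i)) : MvPolynomial (Fin n) ℝ :=
  ∑ a, c i j a • ((bV d g i a : MvPolynomial (Fin n) ℝ))

def Fc (c : EE d g) : MvPolynomial (Fin n) ℝ :=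
  ∑ i, ∑ j, (Pc d g c i j) ^ 2 * withOne g i

variable {d g}

lemma Pc_mem (c : EE d g) (i : Fin (m + 1)) (j : Fin (DDim d g i)) :
    Pc d g c i j ∈ DegSub d (withOne g i) :=
  Submodule.sum_mem _ fun a _ => Submodule.smul_mem _ _ (bV d g i a).2

lemma sum_extend {M : Type*} [AddCommMonoid M] {k K : ℕ} (h : k ≤ K) (v : Fin k → M) :
    ∑ j : Fin K, (if h' : (j : ℕ) < k then v ⟨j, h'⟩ else 0) = ∑ j, v j := by
  rw [Fin.sum_univ_eq_sum_range (fun j => if h' : j < k then v ⟨j, h'⟩ else 0) K]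
  rw [← Finset.sum_subset (Finset.range_subset_range.2 h)
    (fun j _ hj => dif_neg (by simpa using hj))]
  rw [← Fin.sum_univ_eq_sum_range (fun j => if h' : j < k then v ⟨j, h'⟩ else 0) k]
  exact Finset.sum_congr rfl fun j _ => by rw [dif_pos j.isLt]

lemma Fc_mem_TruncQM (c : EE d g) : Fc d g c ∈ TruncQM d g := by
  classical
  set N : ℕ := Finset.univ.sup (DDim d g) with hN
  have hle : ∀ i, DDim d g i ≤ N := fun i => Finset.le_sup (Finset.mem_univ i)
  refine ⟨N, fun i j => if h' : (j : ℕ) < DDim d g i then Pc d g c i ⟨j, h'⟩ else 0,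
    fun i j => ?_, ?_⟩
  · dsimp only
    by_cases h' : (j : ℕ) < DDim d g i
    · rw [dif_pos h']
      exact Pc_mem c i ⟨j, h'⟩
    · rw [dif_neg h']
      exact Or.inl rfl
  · unfold Fc
    refine Finset.sum_congr rfl fun i _ => ?_
    rw [← sum_extend (hle i) (fun j => (Pc d g c i j) ^ 2 * withOne g i)]
    refine Finset.sum_congr rfl fun j _ => ?_
    dsimp only
    by_cases h' : (j : ℕ) < DDim d g i
    · rw [dif_pos h', dif_pos h']
    · rw [dif_neg h', dif_neg h']
      simp

lemma mem_iff_exists_Fc {q : MvPolynomial (Fin n) ℝ} :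
    q ∈ TruncQM d g ↔ ∃ c : EE d g, q = Fc d g c := by
  constructor
  · rintro ⟨N, p, hdegok, rfl⟩
    have hch : ∀ i : Fin (m + 1), ∃ cm : Fin (DDim d g i) → Fin (DDim d g i) → ℝ,
        ∑ j, (p i j) ^ 2
          = ∑ k, (∑ a, cm k a • ((bV d g i a : MvPolynomial (Fin n) ℝ))) ^ 2 := by
      intro i
      obtain ⟨cm, hcm⟩ := gram_reduction (bV d g i)
        (fun j => (⟨p i j, hdegok i j⟩ : DegSub d (withOne g i)))
      exact ⟨cm, hcm⟩
    choose cm hcm using hch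
    refine ⟨cm, ?_⟩
    unfold Fc Pc
    refine Finset.sum_congr rfl fun i _ => ?_
    rw [← Finset.sum_mul, ← Finset.sum_mul, hcm i]
  · rintro ⟨c, rfl⟩
    exact Fc_mem_TruncQM c

lemma Pc_smul (t : ℝ) (c : EE d g) (i : Fin (m + 1)) (j : Fin (DDim d g i)) :
    Pc d g (t • c) i j = t • Pc d g c i j := by
  unfold Pc
  rw [Finset.smul_sum]
  refine Finset.sum_congr rfl fun a _ => ?_
  rw [Pi.smul_apply, Pi.smul_apply, Pi.smul_apply, smul_eq_mul, mul_smul]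

lemma Fc_smul (t : ℝ) (c : EE d g) : Fc d g (t • c) = (t ^ 2) • Fc d g c := by
  unfold Fc
  rw [Finset.smul_sum]
  refine Finset.sum_congr rfl fun i _ => ?_
  rw [Finset.smul_sum]
  refine Finset.sum_congr rfl fun j _ => ?_
  rw [Pc_smul, smul_pow, smul_mul_assoc]

lemma Fc_zero : Fc d g 0 = 0 := by
  simp [Fc, Pc]

lemma Fc_eq_zero (hint : (interior (SolSet g)).Nonempty) {c : EE d g}
    (h : Fc d g c = 0) : c = 0 := by
  have hterm : ∀ (i : Fin (m + 1)) (j : Fin (DDim d g i)),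
      ∀ x ∈ interior (SolSet g), eval x (Pc d g c i j * withOne g i) = 0 := by
    intro i j x hx
    have hx' : x ∈ SolSet g := interior_subset hx
    have hsum : ∑ i, ∑ j, (eval x (Pc d g c i j)) ^ 2 * eval x (withOne g i) = 0 := by
      have h2 := congrArg (eval x) h
      simpa [Fc, map_sum, _root_.map_mul, _root_.map_pow] using h2
    have hnn : ∀ (i : Fin (m + 1)) (j : Fin (DDim d g i)),
        0 ≤ (eval x (Pc d g c i j)) ^ 2 * eval x (withOne g i) :=
      fun i j => mul_nonneg (sq_nonneg _) (eval_withOne_nonneg hx' i)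
    have hiz := (Finset.sum_eq_zero_iff_of_nonneg
      (fun i _ => Finset.sum_nonneg fun j _ => hnn i j)).1 hsum i (Finset.mem_univ i)
    have hjz := (Finset.sum_eq_zero_iff_of_nonneg
      (fun j _ => hnn i j)).1 hiz j (Finset.mem_univ j)
    rw [_root_.map_mul]
    rcases mul_eq_zero.1 hjz with ha | hb0
    · rw [pow_eq_zero_iff (two_ne_zero)] at ha
      rw [ha, zero_mul]
    · rw [hb0, mul_zero]
  have hP0 : ∀ i j, Pc d g c i j * withOne g i = 0 := fun i j =>
    eq_zero_of_eqOn_open isOpen_interior hint (hterm i j)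
  funext i j a
  by_cases hgi : withOne g i = 0
  · exfalso
    have hbot : DegSub d (withOne g i) = ⊥ := by
      rw [Submodule.eq_bot_iff]
      rintro p (rfl | ⟨hne, -⟩)
      · rfl
      · exact absurd hgi hne
    have hd0 : DDim d g i = 0 := by
      unfold DDim
      rw [hbot]
      exact finrank_bot ℝ _
    have hj := j.isLt
    omega
  · have hP : Pc d g c i j = 0 := by
      rcases mul_eq_zero.1 (hP0 i j) with hp | hg
      · exact hp
      · exact absurd hg hgi
    have hz : (∑ a, c i j a • bV d g i a : DegSub d (withOne g i)) = 0 := by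
      apply Subtype.ext
      simp only [ZeroMemClass.coe_zero]
      rw [← hP]
      push_cast [AddSubmonoidClass.coe_finset_sum]
      rfl
    have hre := Module.Basis.repr_sum_self (bV d g i) (c i j)
    rw [hz, map_zero] at hre
    have := congrFun hre a
    simpa using this.symm

end Param


section Topo

variable {n m : ℕ}

lemma apply_le_degsum (mo : Fin n →₀ ℕ) (i : Fin n) : mo i ≤ mo.sum fun _ e => e := by
  by_cases h : i ∈ mo.support
  · exact Finset.single_le_sum (fun a _ => Nat.zero_le _) h
  · rw [Finsupp.notMem_support_iff.1 h]
    exact Nat.zero_le _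

/-- The monomials of total degree at most `d`. -/
def Mons (n d : ℕ) : Finset (Fin n →₀ ℕ) :=
  Finset.Iic (Finsupp.equivFunOnFinite.symm fun _ => d)

lemma mem_Mons {d : ℕ} {mo : Fin n →₀ ℕ} (h : (mo.sum fun _ e => e) ≤ d) :
    mo ∈ Mons n d := by
  rw [Mons, Finset.mem_Iic]
  intro i
  exact le_trans (apply_le_degsum mo i) h

/-- Coefficient projection onto monomials of degree at most `d`. -/
def πm (d : ℕ) (q : MvPolynomial (Fin n) ℝ) : {mo : Fin n →₀ ℕ // mo ∈ Mons n d} → ℝ :=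
  fun s => coeff s.1 q

lemma πm_zero (d : ℕ) : πm (n := n) d 0 = 0 := by
  funext s; simp [πm]

lemma πm_smul (d : ℕ) (t : ℝ) (q : MvPolynomial (Fin n) ℝ) :
    πm d (t • q) = t • πm d q := by
  funext s
  simp [πm, coeff_smul]

lemma πm_add (d : ℕ) (p q : MvPolynomial (Fin n) ℝ) :
    πm d (p + q) = πm d p + πm d q := by
  funext s
  simp [πm, coeff_add]

lemma πm_inj {d : ℕ} {p q : MvPolynomial (Fin n) ℝ} (hp : p.totalDegree ≤ d)
    (hq : q.totalDegree ≤ d) (h : πm d p = πm d q) : p = q := by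
  apply MvPolynomial.ext
  intro mo
  by_cases hmo : (mo.sum fun _ e => e) ≤ d
  · exact congrFun h ⟨mo, mem_Mons hmo⟩
  · have h1 : coeff mo p = 0 := by
      by_contra hc
      exact hmo ((MvPolynomial.le_totalDegree (MvPolynomial.mem_support_iff.2 hc)).trans hp)
    have h2 : coeff mo q = 0 := by
      by_contra hc
      exact hmo ((MvPolynomial.le_totalDegree (MvPolynomial.mem_support_iff.2 hc)).trans hq)
    rw [h1, h2]

variable (d : ℕ) (g : Fin m → MvPolynomial (Fin n) ℝ)

/-- The representation map in coordinates. -/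
def ΨM (c : EE d g) : {mo : Fin n →₀ ℕ // mo ∈ Mons n d} → ℝ := πm d (Fc d g c)

variable {d g}

lemma continuous_coeff_Pc (i : Fin (m + 1)) (j : Fin (DDim d g i)) (t : Fin n →₀ ℕ) :
    Continuous fun c : EE d g => coeff t (Pc d g c i j) := by
  have hh : (fun c : EE d g => coeff t (Pc d g c i j))
      = fun c => ∑ a, c i j a * coeff t ((bV d g i a : MvPolynomial (Fin n) ℝ)) := by
    funext c
    unfold Pc
    rw [MvPolynomial.coeff_sum]
    exact Finset.sum_congr rfl fun a _ => by rw [coeff_smul, smul_eq_mul]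
  rw [hh]
  exact continuous_finset_sum _ fun a _ =>
    (Continuous.mul (f := fun c : EE d g => c i j a)
      ((continuous_apply a).comp ((continuous_apply j).comp (continuous_apply i)))
      continuous_const)

lemma continuous_coeff_Fc (t : Fin n →₀ ℕ) :
    Continuous fun c : EE d g => coeff t (Fc d g c) := by
  classical
  have hh : (fun c : EE d g => coeff t (Fc d g c))
      = fun c => ∑ i, ∑ j, ∑ uv ∈ Finset.HasAntidiagonal.antidiagonal t,
          (∑ uv2 ∈ Finset.HasAntidiagonal.antidiagonal uv.1,
            coeff uv2.1 (Pc d g c i j) * coeff uv2.2 (Pc d g c i j)) * coeff uv.2 (withOne g i) := by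
    funext c
    unfold Fc
    rw [MvPolynomial.coeff_sum]
    refine Finset.sum_congr rfl fun i _ => ?_
    rw [MvPolynomial.coeff_sum]
    refine Finset.sum_congr rfl fun j _ => ?_
    rw [sq, MvPolynomial.coeff_mul]
    refine Finset.sum_congr rfl fun uv _ => ?_
    rw [MvPolynomial.coeff_mul]
  rw [hh]
  refine continuous_finset_sum _ fun i _ => continuous_finset_sum _ fun j _ =>
    continuous_finset_sum _ fun uv _ => Continuous.mul ?_ continuous_const
  exact continuous_finset_sum _ fun uv2 _ =>
    (continuous_coeff_Pc i j uv2.1).mul (continuous_coeff_Pc i j uv2.2)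

lemma continuous_ΨM : Continuous (ΨM d g) :=
  continuous_pi fun s => continuous_coeff_Fc s.1

lemma ΨM_zero : ΨM d g 0 = 0 := by
  rw [ΨM, Fc_zero, πm_zero]

lemma ΨM_smul (t : ℝ) (c : EE d g) : ΨM d g (t • c) = (t ^ 2) • ΨM d g c := by
  rw [ΨM, Fc_smul, πm_smul]
  rfl

lemma ΨM_eq_zero (hint : (interior (SolSet g)).Nonempty) {c : EE d g}
    (h : ΨM d g c = 0) : c = 0 := by
  apply Fc_eq_zero hint
  exact πm_inj (TruncQM.totalDegree_le (Fc_mem_TruncQM c))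
    (by simp) (h.trans (πm_zero d).symm)

set_option synthInstance.maxHeartbeats 1000000 in
lemma nontrivial_EE : Nontrivial (EE d g) := by
  have h1 : (1 : MvPolynomial (Fin n) ℝ) ∈ DegSub d (withOne g 0) := by
    refine Or.inr ⟨one_ne_zero, ?_⟩
    rw [withOne_zero, totalDegree_one]
    omega
  have hD0 : 0 < DDim d g 0 := by
    rw [DDim]
    haveI : Nontrivial (DegSub d (withOne g 0)) := by
      refine ⟨⟨0, ⟨1, h1⟩, fun hc => ?_⟩⟩
      have h2 := congrArg Subtype.val hc
      exact zero_ne_one (α := MvPolynomial (Fin n) ℝ) (by simpa using h2)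
    exact Module.finrank_pos
  refine ⟨0, (fun i j a => 1), fun h => ?_⟩
  have := congrFun (congrFun (congrFun h 0) ⟨0, hD0⟩) ⟨0, hD0⟩
  norm_num at this

set_option maxHeartbeats 2000000 in
lemma isClosed_range_ΨM (hint : (interior (SolSet g)).Nonempty) :
    IsClosed (Set.range (ΨM d g)) := by
  haveI := nontrivial_EE (d := d) (g := g)
  -- coercivity
  obtain ⟨v0, hv0S, hv0min⟩ := (isCompact_sphere (0 : EE d g) 1).exists_isMinOn
    (NormedSpace.sphere_nonempty.2 zero_le_one)
    (continuous_ΨM.norm.continuousOn)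
  set ε : ℝ := ‖ΨM d g v0‖ with hε
  have hεpos : 0 < ε := by
    rw [hε, norm_pos_iff]
    intro hzero
    have hv00 : v0 = 0 := ΨM_eq_zero hint hzero
    have := mem_sphere_zero_iff_norm.1 hv0S
    rw [hv00, norm_zero] at this
    norm_num at this
  have hcoer : ∀ c : EE d g, ε * ‖c‖ ^ 2 ≤ ‖ΨM d g c‖ := by
    intro c
    rcases eq_or_ne c 0 with rfl | hc0
    · simp [ΨM_zero]
    · have hvc : (‖c‖⁻¹ • c) ∈ Metric.sphere (0 : EE d g) 1 := by
        rw [mem_sphere_zero_iff_norm, norm_smul, norm_inv, norm_norm,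
          inv_mul_cancel₀ (norm_ne_zero_iff.2 hc0)]
      have h1 : ε ≤ ‖ΨM d g (‖c‖⁻¹ • c)‖ := hv0min hvc
      have h2 : ΨM d g c = (‖c‖ ^ 2) • ΨM d g (‖c‖⁻¹ • c) := by
        rw [ΨM_smul, smul_smul, ← mul_pow, mul_inv_cancel₀ (norm_ne_zero_iff.2 hc0)]
        simp
      rw [h2, norm_smul]
      have : ‖(‖c‖ ^ 2 : ℝ)‖ = ‖c‖ ^ 2 := by
        rw [Real.norm_eq_abs, abs_of_nonneg (by positivity)]
      rw [this]
      have hpos : (0:ℝ) ≤ ‖c‖ ^ 2 := by positivity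
      calc ε * ‖c‖ ^ 2 = ‖c‖ ^ 2 * ε := by ring
      _ ≤ ‖c‖ ^ 2 * ‖ΨM d g (‖c‖⁻¹ • c)‖ := by
          exact mul_le_mul_of_nonneg_left h1 hpos
  -- sequential closedness
  refine IsSeqClosed.isClosed ?_
  intro seq y hseq hlim
  choose c hc using hseq
  have hbdd : BddAbove (Set.range fun k => ‖seq k‖) :=
    (hlim.norm).bddAbove_range
  obtain ⟨M, hM⟩ := hbdd
  set R : ℝ := Real.sqrt (M / ε) with hR
  have hcR : ∀ k, c k ∈ Metric.closedBall (0 : EE d g) R := by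
    intro k
    rw [Metric.mem_closedBall, dist_zero_right]
    have h1 : ε * ‖c k‖ ^ 2 ≤ ‖seq k‖ := by
      rw [← hc k]; exact hcoer (c k)
    have h2 : ‖seq k‖ ≤ M := hM (Set.mem_range_self k)
    have h3 : ‖c k‖ ^ 2 ≤ M / ε := by
      rw [le_div_iff₀ hεpos]
      nlinarith
    calc ‖c k‖ = Real.sqrt (‖c k‖ ^ 2) := by
          rw [Real.sqrt_sq (norm_nonneg _)]
    _ ≤ R := Real.sqrt_le_sqrt h3
  obtain ⟨a, -, φ, hφmono, hφlim⟩ :=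
    tendsto_subseq_of_bounded Metric.isBounded_closedBall hcR
  refine ⟨a, ?_⟩
  have h1 : Filter.Tendsto (fun j => ΨM d g (c (φ j))) Filter.atTop (nhds (ΨM d g a)) :=
    (continuous_ΨM.tendsto a).comp hφlim
  have h2 : Filter.Tendsto (fun j => ΨM d g (c (φ j))) Filter.atTop (nhds y) := by
    have : (fun j => ΨM d g (c (φ j))) = fun j => seq (φ j) := by
      funext j; rw [← hc (φ j)]
    rw [this]
    exact hlim.comp (hφmono.tendsto_atTop)
  exact tendsto_nhds_unique h1 h2

end Topo


section Sep

variable {n m : ℕ} {d : ℕ} {g : Fin m → MvPolynomial (Fin n) ℝ}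

lemma exists_functional (hint : (interior (SolSet g)).Nonempty)
    {f : MvPolynomial (Fin n) ℝ} (hdf : f.totalDegree ≤ d) (hf : f ∉ TruncQM d g) :
    ∃ Λ : MvPolynomial (Fin n) ℝ → ℝ,
      (∀ p q, Λ (p + q) = Λ p + Λ q) ∧ (∀ (t : ℝ) (p), Λ (t • p) = t * Λ p) ∧
      (∀ q ∈ TruncQM d g, 0 ≤ Λ q) ∧ Λ f < 0 := by
  have hKeq : Set.range (ΨM d g) = πm d '' (TruncQM d g) := by
    ext y
    constructor
    · rintro ⟨c, rfl⟩
      exact ⟨Fc d g c, Fc_mem_TruncQM c, rfl⟩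
    · rintro ⟨q, hq, rfl⟩
      obtain ⟨c, rfl⟩ := mem_iff_exists_Fc.1 hq
      exact ⟨c, rfl⟩
  have hKconv : Convex ℝ (Set.range (ΨM d g)) := by
    rw [hKeq]
    rintro y1 ⟨q1, hq1, rfl⟩ y2 ⟨q2, hq2, rfl⟩ a b ha hb hab
    refine ⟨a • q1 + b • q2, TruncQM.add_mem (TruncQM.smul_mem hq1 ha)
      (TruncQM.smul_mem hq2 hb), ?_⟩
    rw [πm_add, πm_smul, πm_smul]
  have hKcl : IsClosed (Set.range (ΨM d g)) := isClosed_range_ΨM hint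
  have hfK : πm d f ∉ Set.range (ΨM d g) := by
    intro hmem
    rw [hKeq] at hmem
    obtain ⟨q, hq, hπ⟩ := hmem
    have : q = f := πm_inj (TruncQM.totalDegree_le hq) hdf hπ
    exact hf (this ▸ hq)
  obtain ⟨ℓ, u, hu1, hu2⟩ := geometric_hahn_banach_closed_point hKconv hKcl hfK
  have hu0 : 0 < u := by
    have h0K : (0 : {mo : Fin n →₀ ℕ // mo ∈ Mons n d} → ℝ) ∈ Set.range (ΨM d g) :=
      ⟨0, ΨM_zero⟩
    have := hu1 0 h0K
    rwa [map_zero] at this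
  have hle0 : ∀ q ∈ TruncQM d g, ℓ (πm d q) ≤ 0 := by
    intro q hq
    by_contra hpos
    push_neg at hpos
    set t : ℝ := (u + 1) / ℓ (πm d q) with ht
    have htpos : 0 < t := div_pos (by linarith) hpos
    have htq : πm d (t • q) ∈ Set.range (ΨM d g) := by
      rw [hKeq]
      exact ⟨t • q, TruncQM.smul_mem hq htpos.le, rfl⟩
    have := hu1 _ htq
    rw [πm_smul, ℓ.map_smul, smul_eq_mul, ht, div_mul_cancel₀ _ (ne_of_gt hpos)] at this
    linarith
  refine ⟨fun p => -(ℓ (πm d p)), ?_, ?_, ?_, ?_⟩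
  · intro p q
    show -(ℓ (πm d (p + q))) = -(ℓ (πm d p)) + -(ℓ (πm d q))
    rw [πm_add, map_add]
    ring
  · intro t p
    show -(ℓ (πm d (t • p))) = t * -(ℓ (πm d p))
    rw [πm_smul, ℓ.map_smul, smul_eq_mul]
    ring
  · intro q hq
    show (0:ℝ) ≤ -(ℓ (πm d q))
    have := hle0 q hq
    linarith
  · show -(ℓ (πm d f)) < 0
    linarith

lemma forward_main (hd : 1 ≤ d) (hint : (interior (SolSet g)).Nonempty)
    (hLS : Lasserre d g = SolSet g) {f : MvPolynomial (Fin n) ℝ}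
    (hf1 : f.totalDegree ≤ 1) (hfnn : ∀ x ∈ SolSet g, 0 ≤ eval x f) :
    f ∈ TruncQM d g := by
  by_contra hfT
  obtain ⟨Λ, hΛadd, hΛsmul, hΛnn, hΛf⟩ := exists_functional hint (hf1.trans hd) hfT
  obtain ⟨s0, hs0i⟩ := hint
  have hs0 : s0 ∈ SolSet g := interior_subset hs0i
  have hΛ1 : 0 ≤ Λ 1 := hΛnn 1 one_mem_TruncQM
  have hXmem : ∀ i : Fin n, (X i : MvPolynomial (Fin n) ℝ) ∈ restrictTotalDegree (Fin n) ℝ d := by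
    intro i
    rw [mem_restrictTotalDegree, totalDegree_X]
    omega
  have hfW : f ∈ restrictTotalDegree (Fin n) ℝ d :=
    (mem_restrictTotalDegree _ _ _).2 (hf1.trans hd)
  have claim : ∀ ε : ℝ, 0 < ε → 0 ≤ Λ f + ε * eval s0 f := by
    intro ε hε
    set t : ℝ := Λ 1 + ε with htdef
    have ht : 0 < t := by linarith
    have heval_smul : ∀ (cc : ℝ) (p : MvPolynomial (Fin n) ℝ),
        eval s0 (cc • p) = cc * eval s0 p := by
      intro cc p
      rw [smul_eq_C_mul, _root_.map_mul, eval_C]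
    set LL : restrictTotalDegree (Fin n) ℝ d →ₗ[ℝ] ℝ :=
      { toFun := fun p => t⁻¹ * (Λ (p : MvPolynomial (Fin n) ℝ)
          + ε * eval s0 (p : MvPolynomial (Fin n) ℝ))
        map_add' := by
          intro p q
          simp only [Submodule.coe_add, hΛadd, map_add]
          ring
        map_smul' := by
          intro cc p
          simp only [Submodule.coe_smul, hΛsmul, heval_smul, RingHom.id_apply, smul_eq_mul]
          ring } with hLL
    have hLLapp : ∀ p : restrictTotalDegree (Fin n) ℝ d,
        LL p = t⁻¹ * (Λ (p : MvPolynomial (Fin n) ℝ)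
          + ε * eval s0 (p : MvPolynomial (Fin n) ℝ)) := fun p => rfl
    have h1' : ∀ p : restrictTotalDegree (Fin n) ℝ d,
        (p : MvPolynomial (Fin n) ℝ) = 1 → LL p = 1 := by
      intro p hp
      rw [hLLapp, hp]
      rw [_root_.map_one, mul_one, htdef]
      field_simp
    set x'' : Fin n → ℝ := fun i => LL ⟨X i, hXmem i⟩ with hx''def
    have hX' : ∀ i : Fin n, ∀ p : restrictTotalDegree (Fin n) ℝ d,
        (p : MvPolynomial (Fin n) ℝ) = X i → LL p = x'' i := by
      intro i p hp
      have : p = ⟨X i, hXmem i⟩ := Subtype.ext hp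
      rw [this, hx''def]
    have hQM' : ∀ p : restrictTotalDegree (Fin n) ℝ d,
        (p : MvPolynomial (Fin n) ℝ) ∈ TruncQM d g → 0 ≤ LL p := by
      intro p hp
      rw [hLLapp]
      have h1 := hΛnn _ hp
      have h2 := TruncQM.eval_nonneg hp hs0
      have : 0 ≤ t⁻¹ := (inv_pos.2 ht).le
      positivity
    have hxL : x'' ∈ Lasserre d g := ⟨LL, h1', hX', hQM'⟩
    rw [hLS] at hxL
    have hfx : 0 ≤ eval x'' f := hfnn x'' hxL
    have hLf : LL ⟨f, hfW⟩ = eval x'' f := L_eval hd LL x'' h1' hX' hf1 hfW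
    rw [hLLapp] at hLf
    have h0 : 0 ≤ t⁻¹ * (Λ f + ε * eval s0 f) := by
      rw [hLf]; exact hfx
    nlinarith [inv_pos.2 ht]
  have hs0f : 0 ≤ eval s0 f := hfnn s0 hs0
  set ε : ℝ := -Λ f / (2 * (eval s0 f + 1)) with hεdef
  have hεpos : 0 < ε := by
    apply div_pos (by linarith)
    linarith
  have := claim ε hεpos
  have hεb : ε * (eval s0 f + 1) = -Λ f / 2 := by
    rw [hεdef]
    field_simp
  nlinarith
end Sep


section Main

variable {n m : ℕ} {d : ℕ} {g : Fin m → MvPolynomial (Fin n) ℝ}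

lemma C_mem_TruncQM {c0 : ℝ} (h : 0 ≤ c0) : (C c0 : MvPolynomial (Fin n) ℝ) ∈ TruncQM d g := by
  refine ⟨1, fun i _ => if i = 0 then C (Real.sqrt c0) else 0, fun i j => ?_, ?_⟩
  · dsimp only
    by_cases hi : i = 0
    · rw [if_pos hi]
      rcases eq_or_ne (C (Real.sqrt c0) : MvPolynomial (Fin n) ℝ) 0 with hz | hz
      · exact Or.inl hz
      · refine Or.inr ⟨by rw [hi]; exact withOne_ne_zero_zero g, ?_⟩
        rw [hi, withOne_zero, totalDegree_one, totalDegree_C]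
        omega
    · rw [if_neg hi]
      exact Or.inl rfl
  · rw [Fin.sum_univ_succ]
    simp only [Fin.sum_univ_one]
    simp [withOne, Fin.succ_ne_zero, ← C_pow, Real.sq_sqrt h]

lemma lasserre_subset (hconv : Convex ℝ (SolSet g)) (hne : (SolSet g).Nonempty)
    (hRHS : ∀ f : MvPolynomial (Fin n) ℝ, f.totalDegree ≤ 1 →
      (∀ x ∈ SolSet g, 0 ≤ eval x f) → f ∈ TruncQM d g) :
    Lasserre d g ⊆ SolSet g := by
  intro x hx
  obtain ⟨L, h1, hX, hQM⟩ := hx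
  by_contra hxS
  obtain ⟨ℓ, u, hu1, hu2⟩ := geometric_hahn_banach_closed_point hconv isClosed_SolSet hxS
  set aa : Fin n → ℝ := fun i => ℓ (Pi.single i 1) with haa
  have hℓ : ∀ y : Fin n → ℝ, ℓ y = ∑ i, aa i * y i := by
    intro y
    calc ℓ y = ℓ (∑ i, Pi.single i (y i)) := by rw [Finset.univ_sum_single]
    _ = ∑ i, ℓ (Pi.single i (y i)) := map_sum ℓ _ _
    _ = ∑ i, aa i * y i := by
        refine Finset.sum_congr rfl fun i _ => ?_
        have hsingle : (Pi.single i (y i) : Fin n → ℝ)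
            = (y i) • (Pi.single i (1:ℝ) : Fin n → ℝ) := by
          funext j
          rcases eq_or_ne j i with rfl | hj
          · simp
          · simp [Pi.single_eq_of_ne hj]
        rw [hsingle, ℓ.map_smul, smul_eq_mul, haa]
        ring
  set F : MvPolynomial (Fin n) ℝ := C u + ∑ i, C (-aa i) * X i with hF
  have hevalF : ∀ y : Fin n → ℝ, eval y F = u - ℓ y := by
    intro y
    rw [hF, hℓ y]
    simp only [map_add, map_sum, _root_.map_mul, eval_C, eval_X]
    have hneg : ∑ i, -aa i * y i = -∑ i, aa i * y i := by
      rw [← Finset.sum_neg_distrib]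
      exact Finset.sum_congr rfl fun i _ => by ring
    rw [hneg]
    ring
  have hFdeg : F.totalDegree ≤ 1 := by
    rw [hF]
    refine (totalDegree_add _ _).trans (max_le ?_ ?_)
    · rw [totalDegree_C]; omega
    · refine (totalDegree_finset_sum _ _).trans (Finset.sup_le fun i _ => ?_)
      refine (totalDegree_mul _ _).trans ?_
      rw [totalDegree_C, totalDegree_X]
  have hFnn : ∀ y ∈ SolSet g, 0 ≤ eval y F := by
    intro y hy
    rw [hevalF]
    have := hu1 y hy
    linarith
  have hFT : F ∈ TruncQM d g := hRHS F hFdeg hFnn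
  have hxF : eval x F < 0 := by
    rw [hevalF]
    linarith [hu2]
  rcases Nat.eq_zero_or_pos d with hd0 | hd1
  · have hdF : F.totalDegree = 0 := by
      have := TruncQM.totalDegree_le hFT
      omega
    obtain ⟨s, hs⟩ := hne
    have h1' : ∀ i : Fin n, coeff (Finsupp.single i 1) F = 0 := by
      intro i
      by_contra hc
      have := MvPolynomial.le_totalDegree (MvPolynomial.mem_support_iff.2 hc)
      rw [hdF, Finsupp.sum_single_index] at this
      · omega
      · rfl
    have hevals : eval s F = eval x F := by
      rw [eval_deg_le_one hFdeg, eval_deg_le_one hFdeg]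
      simp [h1']
    have := hFnn s hs
    rw [hevals] at this
    linarith
  · have hFW : F ∈ restrictTotalDegree (Fin n) ℝ d :=
      (mem_restrictTotalDegree _ _ _).2 (hFdeg.trans hd1)
    have hLF : L ⟨F, hFW⟩ = eval x F := L_eval hd1 L x h1 hX hFdeg hFW
    have := hQM ⟨F, hFW⟩ hFT
    rw [hLF] at this
    linarith

end Main

theorem stmt_4 {n m : ℕ} (d : ℕ) (g : Fin m → MvPolynomial (Fin n) ℝ)
    (hdeg : ∀ i, (g i).totalDegree ≤ d)
    (hcomp : IsCompact (SolSet g)) (hconv : Convex ℝ (SolSet g))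
    (hint : (interior (SolSet g)).Nonempty) :
    Lasserre d g = SolSet g ↔
      ∀ f : MvPolynomial (Fin n) ℝ, f.totalDegree ≤ 1 →
        (∀ x ∈ SolSet g, 0 ≤ eval x f) → f ∈ TruncQM d g := by
  obtain ⟨s0, hs0i⟩ := hint
  have hne : (SolSet g).Nonempty := ⟨s0, interior_subset hs0i⟩
  constructor
  · intro hLS f hf1 hfnn
    rcases Nat.eq_zero_or_pos d with hd0 | hd1
    · rcases Nat.eq_zero_or_pos n with hn0 | hn1
      · -- `n = 0`: every polynomial of degree at most 1 is constant
        subst hn0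
        have hc0 : 0 ≤ coeff 0 f := by
          obtain ⟨s, hs⟩ := hne
          have := hfnn s hs
          rw [eval_deg_le_one hf1 s] at this
          simpa using this
        have hfC : f = C (coeff 0 f) := by
          conv_lhs => rw [decomp_deg_le_one hf1]
          simp
        rw [hfC]
        exact C_mem_TruncQM hc0
      · -- `n ≥ 1` and `d = 0`: the Lasserre relaxation is everything, contradiction
        exfalso
        obtain ⟨r, hr⟩ := hcomp.isBounded.subset_closedBall 0
        set xx : Fin n → ℝ := fun _ => max r 0 + 1 with hxxdef
        have hxx : xx ∉ SolSet g := by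
          intro hmem
          have hball := hr hmem
          rw [Metric.mem_closedBall, dist_zero_right] at hball
          have hle : ‖xx ⟨0, hn1⟩‖ ≤ ‖xx‖ := norm_le_pi_norm xx ⟨0, hn1⟩
          rw [hxxdef] at hle
          simp only [Real.norm_eq_abs] at hle
          rw [abs_of_nonneg (by positivity : (0:ℝ) ≤ max r 0 + 1)] at hle
          have h1 := le_max_left r 0
          linarith
        have hL : xx ∈ Lasserre d g := by
          refine ⟨{ toFun := fun p => eval s0 ((p : MvPolynomial (Fin n) ℝ))
                    map_add' := fun p q => by simp only [Submodule.coe_add, map_add]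
                    map_smul' := fun c p => by
                      simp only [Submodule.coe_smul, smul_eq_C_mul, _root_.map_mul, eval_C,
                        RingHom.id_apply, smul_eq_mul] },
            fun p hp => by simp [hp],
            fun i p hp => ?_,
            fun p hp => TruncQM.eval_nonneg hp (interior_subset hs0i)⟩
          exfalso
          have hmem := p.2
          rw [mem_restrictTotalDegree, hp, totalDegree_X] at hmem
          omega
        rw [hLS] at hL
        exact hxx hL
    · exact forward_main hd1 ⟨s0, hs0i⟩ hLS hf1 hfnn
  · intro hRHS
    apply Set.Subset.antisymm
    · exact lasserre_subset hconv hne hRHS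
    · exact SolSet_subset_Lasserre
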